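/- Assume c_k ≥ 1 for every edge e_k and d_j ≤ 1 for every job j (the no-bottleneck assumption after scaling c_min = 1). Define rounded capacities c'_k = 2^{⌊log₂ c_k⌋}. If J admits a Round-SAP packing into K rounds under the capacities (c_k), then J admits a Round-SAP packing into 4K rounds under the rounded capacities (c'_k) in which additionally no rectangle is sliced by a horizontal line at an integer power of 2, i.e., there is no job j and integer t ≥ 0 with h_j < 2^t < h_j + d_j. -/

import Mathlib

open scoped Classical

namespace PathSAP

variable {ι : Type*}

/-- Job `i` uses the edge `e_{k+1}` (for `k : Fin m`, edges being 1-indexed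
`e_1, …, e_m`) iff `s_i < k + 1 ≤ t_i`, i.e. iff `s_i ≤ k < t_i`. -/
def uses (s t : ι → ℕ) {m : ℕ} (i : ι) (k : Fin m) : Prop :=
  s i ≤ (k : ℕ) ∧ (k : ℕ) < t i

/-- The open rectangle `(s_i, t_i) × (h_i, h_i + d_i)` of job `i` drawn at height `h i`. -/
def rect (s t : ι → ℕ) (d h : ι → ℝ) (i : ι) : Set (ℝ × ℝ) :=
  Set.Ioo (s i : ℝ) (t i : ℝ) ×ˢ Set.Ioo (h i) (h i + d i)

/-- `(f, h)` is a Round-SAP packing of the jobs into `K` rounds under the edge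
capacities `c`: heights are nonnegative, each job fits below the capacity of each edge
it uses, and rectangles of distinct jobs placed in the same round are disjoint. -/
def IsSAPPacking (s t : ι → ℕ) (d : ι → ℝ) {m : ℕ} (c : Fin m → ℝ)
    {K : ℕ} (f : ι → Fin K) (h : ι → ℝ) : Prop :=
  (∀ i, 0 ≤ h i) ∧
  (∀ i (k : Fin m), uses s t i k → h i + d i ≤ c k) ∧
  (∀ i j, i ≠ j → f i = f j → Disjoint (rect s t d h i) (rect s t d h j))

end PathSAP

namespace PathSAPProof

open PathSAP

lemma exists_band (H : ℝ) : ∃ a : ℕ, H < 2 ^ (a + 1) := by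
  obtain ⟨n, hn⟩ := exists_nat_gt H
  refine ⟨n, hn.trans_le ?_⟩
  have h1 : (n : ℝ) ≤ 2 ^ n := by exact_mod_cast (Nat.lt_two_pow_self (n := n)).le
  have h2 : (2 : ℝ) ^ n ≤ 2 ^ (n + 1) :=
    pow_le_pow_right₀ (by norm_num) (Nat.le_succ n)
  linarith

noncomputable def bidx (H : ℝ) : ℕ := Nat.find (exists_band H)

lemma bidx_lt (H : ℝ) : H < 2 ^ (bidx H + 1) := Nat.find_spec (exists_band H)

lemma bidx_le {H : ℝ} (hb : bidx H ≠ 0) : (2 : ℝ) ^ bidx H ≤ H := by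
  have h := Nat.find_min (exists_band H) (m := bidx H - 1)
    (Nat.sub_lt (Nat.pos_of_ne_zero hb) one_pos)
  have h2 : bidx H - 1 + 1 = bidx H := by omega
  rw [h2] at h
  exact le_of_not_gt h

/-- class and new height of a job with bottom `H` and demand `D`. -/
noncomputable def spec (H D : ℝ) : ℕ × ℝ :=
  if hC : ∃ τ : ℕ, H < 2 ^ τ ∧ (2 : ℝ) ^ τ < H + D then (0, 2 ^ hC.choose - D)
  else if H + D ≤ 1 then (1, H)
  else if bidx H = 0 then (2, H - 1)
  else if H + D ≤ 3 * 2 ^ (bidx H - 1) then (2, H - 2 ^ (bidx H - 1))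
  else if 3 * (2 : ℝ) ^ (bidx H - 1) ≤ H then (3, H - 2 ^ bidx H)
  else (1, 2 ^ bidx H - D)

lemma classify (H D : ℝ) (hH : 0 ≤ H) (hD0 : 0 < D) (hD1 : D ≤ 1) :
    (∃ τ : ℕ, H < 2 ^ τ ∧ (2 : ℝ) ^ τ < H + D ∧ spec H D = (0, 2 ^ τ - D)) ∨
    (H + D ≤ 1 ∧ spec H D = (1, H)) ∨
    (∃ b : ℕ, (2 : ℝ) ^ (b + 1) ≤ H ∧ H < 3 * 2 ^ b ∧ 3 * (2 : ℝ) ^ b < H + D ∧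
      H + D ≤ 2 ^ (b + 2) ∧ spec H D = (1, 2 ^ (b + 1) - D)) ∨
    (1 ≤ H ∧ H + D ≤ 2 ∧ spec H D = (2, H - 1)) ∨
    (∃ b : ℕ, (2 : ℝ) ^ (b + 1) ≤ H ∧ H + D ≤ 3 * 2 ^ b ∧ spec H D = (2, H - 2 ^ b)) ∨
    (∃ b : ℕ, 3 * (2 : ℝ) ^ b ≤ H ∧ H + D ≤ 2 ^ (b + 2) ∧ spec H D = (3, H - 2 ^ (b + 1))) := by
  by_cases hC : ∃ τ : ℕ, H < 2 ^ τ ∧ (2 : ℝ) ^ τ < H + D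
  · left
    refine ⟨hC.choose, hC.choose_spec.1, hC.choose_spec.2, ?_⟩
    simp only [spec, dif_pos hC]
  by_cases hL : H + D ≤ 1
  · right; left
    exact ⟨hL, by simp only [spec, dif_neg hC, if_pos hL]⟩
  have hH1 : (1 : ℝ) ≤ H := by
    by_contra hx
    exact hC ⟨0, by simpa using lt_of_not_ge hx, by simpa using lt_of_not_ge hL⟩
  rcases Nat.eq_zero_or_pos (bidx H) with hb0 | hbpos
  · right; right; right; left
    have hH2 : H < 2 := by
      have := bidx_lt H
      rw [hb0] at this
      simpa using this
    have hT2 : H + D ≤ 2 := by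
      by_contra hx
      exact hC ⟨1, by norm_num; exact hH2, by norm_num; exact lt_of_not_ge hx⟩
    exact ⟨hH1, hT2, by simp only [spec, dif_neg hC, if_neg hL, if_pos hb0]⟩
  obtain ⟨b, hb⟩ : ∃ b, bidx H = b + 1 := ⟨bidx H - 1, by omega⟩
  have h2b : (2 : ℝ) ^ (b + 1) ≤ H := by rw [← hb]; exact bidx_le (by omega)
  have hlt : H < 2 ^ (b + 2) := by
    have := bidx_lt H
    rwa [hb] at this
  have hT : H + D ≤ 2 ^ (b + 2) := by
    by_contra hx
    exact hC ⟨b + 2, hlt, lt_of_not_ge hx⟩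
  by_cases hLO : H + D ≤ 3 * (2 : ℝ) ^ b
  · right; right; right; right; left
    refine ⟨b, h2b, hLO, ?_⟩
    simp only [spec, dif_neg hC, if_neg hL, hb, Nat.add_sub_cancel, Nat.succ_ne_zero,
      if_false, if_pos hLO]
  by_cases hUP : 3 * (2 : ℝ) ^ b ≤ H
  · right; right; right; right; right
    refine ⟨b, hUP, hT, ?_⟩
    simp only [spec, dif_neg hC, if_neg hL, hb, Nat.add_sub_cancel, Nat.succ_ne_zero,
      if_false, if_neg hLO, if_pos hUP]
  · right; right; left
    refine ⟨b, h2b, lt_of_not_ge hUP, lt_of_not_ge hLO, hT, ?_⟩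
    simp only [spec, dif_neg hC, if_neg hL, hb, Nat.add_sub_cancel, Nat.succ_ne_zero,
      if_false, if_neg hLO, if_neg hUP]

lemma two_pow_one_le (n : ℕ) : (1 : ℝ) ≤ 2 ^ n :=
  one_le_pow₀ (by norm_num)

lemma two_pow_mono {a b : ℕ} (hab : a ≤ b) : (2 : ℝ) ^ a ≤ 2 ^ b :=
  pow_le_pow_right₀ (by norm_num) hab

lemma two_pow_succ' (n : ℕ) : (2 : ℝ) ^ (n + 1) = 2 ^ n + 2 ^ n := by
  rw [pow_succ]; ring

lemma exp_lt_of_pow_lt {a b : ℕ} (hab : (2 : ℝ) ^ a < 2 ^ b) : a < b := by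
  by_contra hx
  push_neg at hx
  exact absurd (two_pow_mono hx) (not_le.mpr hab)

lemma pow_le_rounded {y : ℝ} (x : ℕ) (hy : (2 : ℝ) ^ x ≤ y) :
    (2 : ℝ) ^ x ≤ 2 ^ (⌊Real.logb 2 y⌋) := by
  have hy0 : (0 : ℝ) < y := lt_of_lt_of_le (by positivity) hy
  have h1 : (x : ℝ) ≤ Real.logb 2 y := by
    rw [Real.le_logb_iff_rpow_le (by norm_num) hy0, Real.rpow_natCast]
    exact hy
  have h2 : (x : ℤ) ≤ ⌊Real.logb 2 y⌋ := Int.le_floor.mpr (by exact_mod_cast h1)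
  calc (2 : ℝ) ^ x = (2 : ℝ) ^ (x : ℤ) := (zpow_natCast 2 x).symm
    _ ≤ 2 ^ (⌊Real.logb 2 y⌋) := zpow_le_zpow_right₀ (by norm_num) h2

variable {ι : Type*}

lemma rect_disjoint_of_sep {s t : ι → ℕ} {d h' : ι → ℝ} {i j : ι}
    (H : h' i + d i ≤ h' j) : Disjoint (rect s t d h' i) (rect s t d h' j) := by
  rw [Set.disjoint_left]
  rintro ⟨x, y⟩ ⟨-, hy1⟩ ⟨-, hy2⟩
  exact absurd (hy1.2.trans_le (H.trans hy2.1.le)) (lt_irrefl y)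

lemma rect_disjoint_transfer {s t : ι → ℕ} {d h h' : ι → ℝ} {i j : ι}
    (horig : Disjoint (rect s t d h i) (rect s t d h j)) (y : ℝ)
    (hyi : h i < y ∧ y < h i + d i) (hyj : h j < y ∧ y < h j + d j) :
    Disjoint (rect s t d h' i) (rect s t d h' j) := by
  rw [Set.disjoint_left] at horig ⊢
  rintro ⟨x, z⟩ ⟨hx1, -⟩ ⟨hx2, -⟩
  exact horig (a := (x, y)) ⟨hx1, hyi⟩ ⟨hx2, hyj⟩

lemma rect_disjoint_shift {s t : ι → ℕ} {d h h' : ι → ℝ} {i j : ι} (cc : ℝ)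
    (hi : h' i = h i - cc) (hj : h' j = h j - cc)
    (horig : Disjoint (rect s t d h i) (rect s t d h j)) :
    Disjoint (rect s t d h' i) (rect s t d h' j) := by
  rw [Set.disjoint_left] at horig ⊢
  rintro ⟨x, z⟩ ⟨hx1, hz1⟩ ⟨hx2, hz2⟩
  rw [hi] at hz1
  rw [hj] at hz2
  obtain ⟨hz1a, hz1b⟩ := hz1
  obtain ⟨hz2a, hz2b⟩ := hz2
  refine horig (a := (x, z + cc)) ⟨hx1, ⟨show h i < z + cc by linarith,
      show z + cc < h i + d i by linarith⟩⟩
    ⟨hx2, ⟨show h j < z + cc by linarith, show z + cc < h j + d j by linarith⟩⟩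

end PathSAPProof

open PathSAP PathSAPProof in
/-- Assume `c_k ≥ 1` for every edge and `d_j ≤ 1` for every job (the
no-bottleneck assumption after scaling `c_min = 1`). Define rounded capacities
`c'_k = 2^{⌊log₂ c_k⌋}`. If `J` admits a Round-SAP packing into `K` rounds under `(c_k)`,
then `J` admits a Round-SAP packing into `4K` rounds under `(c'_k)` in which additionally
no rectangle is sliced by a horizontal line at an integer power of 2: there is no job `j`
and integer `t ≥ 0` with `h_j < 2^t < h_j + d_j`. -/
theorem sap_rounding_to_powers_of_two {ι : Type*} [Fintype ι] {m : ℕ}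
    (c : Fin m → ℝ) (hc : ∀ k, 1 ≤ c k)
    (s t : ι → ℕ) (d : ι → ℝ)
    (hst : ∀ i, s i < t i) (htm : ∀ i, t i ≤ m)
    (hd0 : ∀ i, 0 < d i) (hd1 : ∀ i, d i ≤ 1)
    (K : ℕ) (f : ι → Fin K) (h : ι → ℝ)
    (hpack : IsSAPPacking s t d c f h) :
    ∃ (f' : ι → Fin (4 * K)) (h' : ι → ℝ),
      IsSAPPacking s t d (fun k => (2 : ℝ) ^ (⌊Real.logb 2 (c k)⌋)) f' h' ∧
      ∀ i, ¬ ∃ τ : ℕ, h' i < 2 ^ τ ∧ ((2 : ℝ) ^ τ) < h' i + d i := by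
  classical
  obtain ⟨hnn, hcap, hdisj⟩ := hpack
  refine ⟨fun i => ⟨4 * (f i).1 + (spec (h i) (d i)).1 % 4,
      by have := (f i).2; have : (spec (h i) (d i)).1 % 4 < 4 := Nat.mod_lt _ (by norm_num);
         omega⟩,
    fun i => (spec (h i) (d i)).2, ⟨?_, ?_, ?_⟩, ?_⟩
  · -- nonnegativity
    intro i
    show (0 : ℝ) ≤ (spec (h i) (d i)).2
    obtain ⟨τi, ci1, ci2, ci3⟩ | ⟨ci1, ci3⟩ | ⟨bi, ci1, ci2, ci4, ci5, ci3⟩ |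
        ⟨ci1, ci2, ci3⟩ | ⟨bi, ci1, ci2, ci3⟩ | ⟨bi, ci1, ci2, ci3⟩ :=
      classify (h i) (d i) (hnn i) (hd0 i) (hd1 i) <;> rw [ci3]
    · have := two_pow_one_le τi
      have := hd1 i
      simp only
      linarith
    · simpa using hnn i
    · have := two_pow_one_le (bi + 1)
      have := hd1 i
      simp only
      linarith
    · simp only
      linarith
    · have := two_pow_succ' bi
      have h0 : (0:ℝ) < 2 ^ bi := by positivity
      simp only
      linarith
    · have := two_pow_succ' bi
      have h0 : (0:ℝ) < 2 ^ bi := by positivity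
      simp only
      linarith
  · -- capacity
    intro i k hk
    have hT : h i + d i ≤ c k := hcap i k hk
    have hck : (1 : ℝ) ≤ c k := hc k
    have hdi := hd0 i
    show (spec (h i) (d i)).2 + d i ≤ (2 : ℝ) ^ (⌊Real.logb 2 (c k)⌋)
    obtain ⟨τi, ci1, ci2, ci3⟩ | ⟨ci1, ci3⟩ | ⟨bi, ci1, ci2, ci4, ci5, ci3⟩ |
        ⟨ci1, ci2, ci3⟩ | ⟨bi, ci1, ci2, ci3⟩ | ⟨bi, ci1, ci2, ci3⟩ :=
      classify (h i) (d i) (hnn i) (hd0 i) (hd1 i) <;> rw [ci3] <;> simp only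
    · have := pow_le_rounded (y := c k) τi (by linarith)
      linarith
    · have := pow_le_rounded (y := c k) 0 (by simpa using hck)
      simp only [pow_zero] at this
      linarith
    · have := pow_le_rounded (y := c k) (bi + 1) (by linarith)
      linarith
    · have := pow_le_rounded (y := c k) 0 (by simpa using hck)
      simp only [pow_zero] at this
      linarith
    · have hp := pow_le_rounded (y := c k) (bi + 1) (by linarith)
      have := two_pow_succ' bi
      linarith
    · have h0 : (0:ℝ) < 2 ^ bi := by positivity
      have hp := pow_le_rounded (y := c k) (bi + 1) (by
        have := two_pow_succ' bi
        linarith)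
      have e1 := two_pow_succ' bi
      have e2 := two_pow_succ' (bi + 1)
      linarith
  · -- disjointness
    intro i j hij hf
    have e : 4 * (f i).1 + (spec (h i) (d i)).1 % 4
        = 4 * (f j).1 + (spec (h j) (d j)).1 % 4 := congrArg Fin.val hf
    have horig0 : (f i).1 = (f j).1 → Disjoint (rect s t d h i) (rect s t d h j) :=
      fun hv => hdisj i j hij (Fin.ext hv)
    show Disjoint (rect s t d (fun i => (spec (h i) (d i)).2) i)
      (rect s t d (fun i => (spec (h i) (d i)).2) j)
    obtain ⟨τi, ci1, ci2, ci3⟩ | ⟨ci1, ci3⟩ | ⟨bi, ci1, ci2, ci4, ci5, ci3⟩ |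
        ⟨ci1, ci2, ci3⟩ | ⟨bi, ci1, ci2, ci3⟩ | ⟨bi, ci1, ci2, ci3⟩ :=
      classify (h i) (d i) (hnn i) (hd0 i) (hd1 i) <;>
    obtain ⟨τj, cj1, cj2, cj3⟩ | ⟨cj1, cj3⟩ | ⟨bj, cj1, cj2, cj4, cj5, cj3⟩ |
        ⟨cj1, cj2, cj3⟩ | ⟨bj, cj1, cj2, cj3⟩ | ⟨bj, cj1, cj2, cj3⟩ :=
      classify (h j) (d j) (hnn j) (hd0 j) (hd1 j) <;>
    rw [ci3, cj3] at e <;> simp only [Prod.fst] at e <;>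
    [skip; omega; omega; omega; omega; omega;
     omega; skip; skip; omega; omega; omega;
     omega; skip; skip; omega; omega; omega;
     omega; omega; omega; skip; skip; omega;
     omega; omega; omega; skip; skip; omega;
     omega; omega; omega; omega; omega; skip] <;>
    (have horig := horig0 (by omega))
    · -- C, C
      rcases lt_trichotomy τi τj with hlt | heq | hgt
      · refine rect_disjoint_of_sep ?_
        simp only [ci3, cj3]
        have h1 := two_pow_mono (show τi + 1 ≤ τj by omega)
        have h2 := two_pow_succ' τi
        have h3 := two_pow_one_le τi
        have := hd1 j
        linarith
      · subst heq
        exact rect_disjoint_transfer horig (2 ^ τi) ⟨ci1, ci2⟩ ⟨cj1, cj2⟩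
      · refine (rect_disjoint_of_sep (i := j) (j := i) ?_).symm
        simp only [ci3, cj3]
        have h1 := two_pow_mono (show τj + 1 ≤ τi by omega)
        have h2 := two_pow_succ' τj
        have h3 := two_pow_one_le τj
        have := hd1 i
        linarith
    · -- L, L
      refine rect_disjoint_shift 0 ?_ ?_ horig <;> simp [ci3, cj3]
    · -- L, MID
      refine rect_disjoint_of_sep ?_
      simp only [ci3, cj3]
      have h1 := two_pow_mono (show 1 ≤ bj + 1 by omega)
      have := hd1 j
      norm_num at h1
      linarith
    · -- MID, L
      refine (rect_disjoint_of_sep (i := j) (j := i) ?_).symm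
      simp only [ci3, cj3]
      have h1 := two_pow_mono (show 1 ≤ bi + 1 by omega)
      have := hd1 i
      norm_num at h1
      linarith
    · -- MID, MID
      rcases lt_trichotomy bi bj with hlt | heq | hgt
      · refine rect_disjoint_of_sep ?_
        simp only [ci3, cj3]
        have h1 := two_pow_mono (show bi + 2 ≤ bj + 1 by omega)
        have h2 := two_pow_succ' (bi + 1)
        have h3 := two_pow_one_le (bi + 1)
        have := hd1 j
        linarith
      · subst heq
        exact rect_disjoint_transfer horig (3 * 2 ^ bi) ⟨ci2, ci4⟩ ⟨cj2, cj4⟩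
      · refine (rect_disjoint_of_sep (i := j) (j := i) ?_).symm
        simp only [ci3, cj3]
        have h1 := two_pow_mono (show bj + 2 ≤ bi + 1 by omega)
        have h2 := two_pow_succ' (bj + 1)
        have h3 := two_pow_one_le (bj + 1)
        have := hd1 i
        linarith
    · -- Z, Z
      refine rect_disjoint_shift 1 ?_ ?_ horig <;> simp [ci3, cj3]
    · -- Z, LO
      refine rect_disjoint_of_sep ?_
      simp only [ci3, cj3]
      have h1 := two_pow_succ' bj
      have h2 := two_pow_one_le bj
      linarith
    · -- LO, Z
      refine (rect_disjoint_of_sep (i := j) (j := i) ?_).symm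
      simp only [ci3, cj3]
      have h1 := two_pow_succ' bi
      have h2 := two_pow_one_le bi
      linarith
    · -- LO, LO
      rcases lt_trichotomy bi bj with hlt | heq | hgt
      · refine rect_disjoint_of_sep ?_
        simp only [ci3, cj3]
        have h1 := two_pow_mono (show bi + 1 ≤ bj by omega)
        have h2 := two_pow_succ' bi
        have h3 := two_pow_succ' bj
        linarith
      · subst heq
        refine rect_disjoint_shift ((2:ℝ) ^ bi) ?_ ?_ horig <;> simp [ci3, cj3]
      · refine (rect_disjoint_of_sep (i := j) (j := i) ?_).symm
        simp only [ci3, cj3]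
        have h1 := two_pow_mono (show bj + 1 ≤ bi by omega)
        have h2 := two_pow_succ' bj
        have h3 := two_pow_succ' bi
        linarith
    · -- UP, UP
      rcases lt_trichotomy bi bj with hlt | heq | hgt
      · refine rect_disjoint_of_sep ?_
        simp only [ci3, cj3]
        have h1 := two_pow_mono (show bi + 1 ≤ bj by omega)
        have h2 := two_pow_succ' (bi + 1)
        have h3 := two_pow_succ' bi
        have h4 := two_pow_succ' bj
        linarith
      · subst heq
        refine rect_disjoint_shift ((2:ℝ) ^ (bi + 1)) ?_ ?_ horig <;> simp [ci3, cj3]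
      · refine (rect_disjoint_of_sep (i := j) (j := i) ?_).symm
        simp only [ci3, cj3]
        have h1 := two_pow_mono (show bj + 1 ≤ bi by omega)
        have h2 := two_pow_succ' (bj + 1)
        have h3 := two_pow_succ' bj
        have h4 := two_pow_succ' bi
        linarith
  · -- no slicing at powers of two
    intro i hx
    obtain ⟨τ, h1, h2⟩ := hx
    have h1' : (spec (h i) (d i)).2 < 2 ^ τ := h1
    have h2' : (2 : ℝ) ^ τ < (spec (h i) (d i)).2 + d i := h2
    clear h1 h2
    obtain ⟨τi, ci1, ci2, ci3⟩ | ⟨ci1, ci3⟩ | ⟨bi, ci1, ci2, ci4, ci5, ci3⟩ |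
        ⟨ci1, ci2, ci3⟩ | ⟨bi, ci1, ci2, ci3⟩ | ⟨bi, ci1, ci2, ci3⟩ :=
      classify (h i) (d i) (hnn i) (hd0 i) (hd1 i) <;>
      rw [ci3] at h1' h2' <;> simp only at h1' h2'
    · -- C : interval (2^τi - d, 2^τi)
      have hlt : τ < τi := exp_lt_of_pow_lt (by linarith)
      have h1 := two_pow_mono (show τ + 1 ≤ τi by omega)
      have h2 := two_pow_succ' τ
      have h3 := two_pow_one_le τ
      have := hd1 i
      linarith
    · have := two_pow_one_le τ
      linarith
    · -- MID : interval (2^(bi+1) - d, 2^(bi+1))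
      have hlt : τ < bi + 1 := exp_lt_of_pow_lt (by linarith)
      have h1 := two_pow_mono (show τ + 1 ≤ bi + 1 by omega)
      have h2 := two_pow_succ' τ
      have h3 := two_pow_one_le τ
      have := hd1 i
      linarith
    · have := two_pow_one_le τ
      linarith
    · -- LO : interval ⊆ [2^bi, 2^(bi+1)]
      have hb : (2:ℝ) ^ bi < 2 ^ τ := by
        have h2 := two_pow_succ' bi
        linarith
      have hlt : bi < τ := exp_lt_of_pow_lt hb
      have h1 := two_pow_mono (show bi + 1 ≤ τ by omega)
      have h2 := two_pow_succ' bi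
      linarith
    · -- UP : interval ⊆ [2^bi, 2^(bi+1)]
      have hb : (2:ℝ) ^ bi < 2 ^ τ := by
        have h2 := two_pow_succ' (bi + 1)
        have h3 := two_pow_succ' bi
        linarith
      have hlt : bi < τ := exp_lt_of_pow_lt hb
      have h1 := two_pow_mono (show bi + 1 ≤ τ by omega)
      have h2 := two_pow_succ' (bi + 1)
      have h3 := two_pow_succ' bi
      linarith
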